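/- Let N ≥ 2 be an even integer, Γ = {exp(2πik/N)·r : k ∈ ℤ, r ∈ ℝ, r > 0} ⊆ ℂ, and let μ be a nonzero complex number with μ ∉ Γ. Let H be a complex Hilbert space and U a unitary bounded operator on H with U^N = 1. Then the bounded operator conj(μ)·U² − μ·1 is invertible, and its inverse can be written as a₀·1 + a₁·U + a₂·U² + … + a_{N−1}·U^{N−1} for some complex coefficients a₀, …, a_{N−1}. -/

import Mathlib

open Complex

private lemma sum_range_two_mul' {β : Type*} [AddCommMonoid β] (f : ℕ → β) (M : ℕ) :
    ∑ j ∈ Finset.range (2 * M), f j = ∑ i ∈ Finset.range M, (f (2 * i) + f (2 * i + 1)) := by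
  induction M with
  | zero => simp
  | succ m ih =>
      rw [Nat.mul_succ, Finset.sum_range_succ, Finset.sum_range_succ, Finset.sum_range_succ, ← ih]
      abel

/-- Let `N ≥ 2` be an even integer, `Γ` the union of the open rays through the `N`-th roots
of unity, and `μ ≠ 0` with `μ ∉ Γ`. If `U` is a unitary operator on a complex Hilbert space
`H` with `U^N = 1`, then `conj(μ)·U² − μ·1` is invertible and its inverse is a polynomial
`a₀·1 + a₁·U + ⋯ + a_{N−1}·U^{N−1}` in `U`. -/
theorem conj_mu_U_sq_sub_mu_invertible
    {H : Type*} [NormedAddCommGroup H] [InnerProductSpace ℂ H] [CompleteSpace H]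
    (N : ℕ) (hN : 2 ≤ N) (hNe : Even N) (μ : ℂ) (hμ : μ ≠ 0)
    (hμΓ : μ ∉ {z : ℂ | ∃ (k : ℤ) (r : ℝ), 0 < r ∧
      z = Complex.exp (2 * Real.pi * Complex.I * (k : ℂ) / (N : ℂ)) * (r : ℂ)})
    (U : H →L[ℂ] H) (hU : U ∈ unitary (H →L[ℂ] H)) (hUN : U ^ N = 1) :
    IsUnit ((starRingEnd ℂ) μ • U ^ 2 - μ • (1 : H →L[ℂ] H)) ∧
      ∃ a : Fin N → ℂ,
        ((starRingEnd ℂ) μ • U ^ 2 - μ • (1 : H →L[ℂ] H)) *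
            (∑ j : Fin N, a j • U ^ (j : ℕ)) = 1 ∧
          (∑ j : Fin N, a j • U ^ (j : ℕ)) *
            ((starRingEnd ℂ) μ • U ^ 2 - μ • (1 : H →L[ℂ] H)) = 1 := by
  obtain ⟨M, hM⟩ := hNe
  have hNM : N = 2 * M := by omega
  have hM0 : M ≠ 0 := by omega
  have hconj : (starRingEnd ℂ) μ ≠ 0 := by simpa using hμ
  set β : ℂ := μ / (starRingEnd ℂ) μ with hβ
  have hcb : (starRingEnd ℂ) μ * β = μ := by rw [hβ]; exact mul_div_cancel₀ μ hconj
  -- the key arithmetic fact: β ^ M ≠ 1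
  have hβM : β ^ M ≠ 1 := by
    intro h1
    apply hμΓ
    have habs : (‖μ‖ : ℂ) * Complex.exp (Complex.arg μ * Complex.I) = μ :=
      Complex.norm_mul_exp_arg_mul_I μ
    have habs0 : (‖μ‖ : ℂ) ≠ 0 := by
      simpa using hμ
    have hconjμ : (starRingEnd ℂ) μ =
        (‖μ‖ : ℂ) * Complex.exp (-(Complex.arg μ) * Complex.I) := by
      conv_lhs => rw [← habs]
      rw [map_mul, ← Complex.exp_conj]
      simp [Complex.conj_ofReal]
    have hβval : β = Complex.exp (2 * Complex.arg μ * Complex.I) := by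
      have hrw : β = ((‖μ‖ : ℂ) * Complex.exp (Complex.arg μ * Complex.I)) /
          ((‖μ‖ : ℂ) * Complex.exp (-(Complex.arg μ) * Complex.I)) := by
        rw [hβ, hconjμ, habs]
      rw [hrw, mul_div_mul_left _ _ habs0, ← Complex.exp_sub]
      congr 1
      ring
    rw [hβval, ← Complex.exp_nat_mul, Complex.exp_eq_one_iff] at h1
    obtain ⟨n, hn⟩ := h1
    refine ⟨n, ‖μ‖, norm_pos_iff.mpr hμ, ?_⟩
    have hMne : (M : ℂ) ≠ 0 := Nat.cast_ne_zero.mpr hM0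
    have hNc : (N : ℂ) = 2 * (M : ℂ) := by rw [hNM]; push_cast; ring
    have harg : 2 * (Real.pi : ℂ) * Complex.I * (n : ℂ) / (N : ℂ)
        = (Complex.arg μ : ℂ) * Complex.I := by
      rw [hNc, div_eq_iff (mul_ne_zero two_ne_zero hMne)]
      linear_combination -hn
    rw [harg, mul_comm]
    exact habs.symm
  -- the geometric sum inverse
  set V : H →L[ℂ] H := U ^ 2 with hV
  have hVM : V ^ M = 1 := by rw [hV, ← pow_mul, ← hNM, hUN]
  have hcomm : Commute V (β • (1 : H →L[ℂ] H)) := by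
    exact (Commute.one_right V).smul_right β
  set P : H →L[ℂ] H := ∑ i ∈ Finset.range M, V ^ i * (β • (1 : H →L[ℂ] H)) ^ (M - 1 - i)
    with hP
  have hden : (starRingEnd ℂ) μ * (1 - β ^ M) ≠ 0 :=
    mul_ne_zero hconj (sub_ne_zero.mpr (Ne.symm hβM))
  set c : ℂ := ((starRingEnd ℂ) μ * (1 - β ^ M))⁻¹ with hc
  have hA : (starRingEnd ℂ) μ • U ^ 2 - μ • (1 : H →L[ℂ] H)
      = (starRingEnd ℂ) μ • (V - β • (1 : H →L[ℂ] H)) := by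
    rw [smul_sub, smul_smul, hcb, hV]
  have hmul1 : (V - β • (1 : H →L[ℂ] H)) * P = (1 - β ^ M) • 1 := by
    rw [hP, hcomm.mul_geom_sum₂, hVM, smul_pow, one_pow, sub_smul, one_smul]
  have hmul2 : P * (V - β • (1 : H →L[ℂ] H)) = (1 - β ^ M) • 1 := by
    rw [hP, hcomm.geom_sum₂_mul, hVM, smul_pow, one_pow, sub_smul, one_smul]
  have h2 : (1 : ℂ) - β ^ M ≠ 0 := sub_ne_zero.mpr (Ne.symm hβM)
  have hscal : (starRingEnd ℂ) μ * c * (1 - β ^ M) = 1 := by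
    rw [hc]; field_simp
  have key1 : ((starRingEnd ℂ) μ • U ^ 2 - μ • (1 : H →L[ℂ] H)) * (c • P) = 1 := by
    rw [hA, smul_mul_assoc, mul_smul_comm, hmul1, smul_smul, smul_smul, hscal, one_smul]
  have key2 : (c • P) * ((starRingEnd ℂ) μ • U ^ 2 - μ • (1 : H →L[ℂ] H)) = 1 := by
    rw [hA, mul_smul_comm, smul_mul_assoc, hmul2, smul_smul, smul_smul, hscal, one_smul]
  -- express c • P as a Fin N sum
  set A' : ℕ → ℂ := fun j => if j % 2 = 0 then c * β ^ (M - 1 - j / 2) else 0 with hA'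
  have hsum : (∑ j : Fin N, A' (j : ℕ) • U ^ (j : ℕ)) = c • P := by
    rw [Fin.sum_univ_eq_sum_range (fun j => A' j • U ^ j) N, hNM,
      sum_range_two_mul' (fun j => A' j • U ^ j) M, hP, Finset.smul_sum]
    refine Finset.sum_congr rfl fun i _ => ?_
    have h1 : A' (2 * i) = c * β ^ (M - 1 - i) := by
      simp [hA', Nat.mul_div_cancel_left i (by norm_num : 0 < 2)]
    have h2 : A' (2 * i + 1) = 0 := by simp [hA', Nat.mul_add_mod]
    rw [h1, h2, zero_smul, add_zero, hV, ← pow_mul, smul_pow, one_pow, mul_smul_comm,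
      mul_one, smul_smul]
  refine ⟨?_, fun j : Fin N => A' (j : ℕ), by rw [hsum]; exact key1,
    by rw [hsum]; exact key2⟩
  exact ⟨⟨_, c • P, key1, key2⟩, rfl⟩
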